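/- Every bounded C² radial solution v of -Δv = 8e^{2η₀} v on ℝ² with finite Dirichlet energy ∫_{ℝ²}|∇v|² dx < ∞ is of the form v(x) = α·(1-|x|²)/(1+|x|²) for some constant α ∈ ℝ. -/

import Mathlib

open MeasureTheory Real Set Filter Topology

noncomputable section

abbrev E2 := EuclideanSpace ℝ (Fin 2)

/-- The Euclidean Laplacian of `f : ℝ² → ℝ`, as sum of second directional derivatives. -/
def lap (f : E2 → ℝ) (x : E2) : ℝ :=
  ∑ i : Fin 2, deriv (deriv (fun t : ℝ => f (x + t • (EuclideanSpace.single i (1:ℝ))))) 0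

/-- The standard Liouville bubble `η₀(x) = -ln(1+|x|²)`. -/
def eta0 (x : E2) : ℝ := -Real.log (1 + ‖x‖^2)

namespace Stmt15Aux

def phi (r : ℝ) : ℝ := (1 - r^2)/(1+r^2)
def phiD (r : ℝ) : ℝ := -4*r/(1+r^2)^2
def phiDD (r : ℝ) : ℝ := (12*r^2 - 4)/(1+r^2)^3

lemma denom_pos (r : ℝ) : (0:ℝ) < 1 + r^2 := by positivity
lemma denom_ne (r : ℝ) : (1 + r^2 : ℝ) ≠ 0 := (denom_pos r).ne'

lemma hasDerivAt_phi (r : ℝ) : HasDerivAt phi (phiD r) r := by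
  have h1 : HasDerivAt (fun r : ℝ => 1 - r^2) (-(2*r)) r := by
    simpa using ((hasDerivAt_pow 2 r).const_sub 1)
  have h2 : HasDerivAt (fun r : ℝ => 1 + r^2) (2*r) r := by
    simpa using ((hasDerivAt_pow 2 r).const_add 1)
  have := h1.div h2 (denom_ne r)
  refine this.congr_deriv ?_
  symm
  unfold phiD
  field_simp
  ring

lemma hasDerivAt_phiD (r : ℝ) : HasDerivAt phiD (phiDD r) r := by
  have h1 : HasDerivAt (fun r : ℝ => -4*r) (-4) r := by
    simpa using (hasDerivAt_id r).const_mul (-4 : ℝ)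
  have h2 : HasDerivAt (fun r : ℝ => 1 + r^2) (2*r) r := by
    simpa using ((hasDerivAt_pow 2 r).const_add 1)
  have h3 : HasDerivAt (fun r : ℝ => (1 + r^2)^2) (2 * (1+r^2)^1 * (2*r)) r := h2.pow 2
  have := h1.div h3 (pow_ne_zero 2 (denom_ne r))
  refine this.congr_deriv ?_
  symm
  unfold phiDD
  rw [div_eq_div_iff (by positivity) (by positivity)]
  ring

lemma phi_ode (r : ℝ) (hr : r ≠ 0) :
    phiDD r = -(phiD r / r) - 8/(1+r^2)^2 * phi r := by
  unfold phi phiD phiDD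
  field_simp
  ring

lemma continuous_phi : Continuous phi :=
  (continuous_const.sub (continuous_pow 2)).div
    (continuous_const.add (continuous_pow 2)) denom_ne

lemma continuous_phiD : Continuous phiD := by
  apply Continuous.div (by continuity) (by continuity)
  exact fun r => pow_ne_zero 2 (denom_ne r)

lemma const_of_deriv_zero {f : ℝ → ℝ} {s : Set ℝ} (ho : IsOpen s) (hc : Convex ℝ s)
    (hd : ∀ x ∈ s, HasDerivAt f 0 x) {x y : ℝ} (hx : x ∈ s) (hy : y ∈ s) : f x = f y := by
  refine hc.is_const_of_fderivWithin_eq_zero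
    (fun z hz => ((hd z hz).differentiableAt).differentiableWithinAt)
    (fun z hz => ?_) hx hy
  rw [fderivWithin_of_isOpen ho hz]
  have h0 : HasFDerivAt f ((1 : ℝ →L[ℝ] ℝ).smulRight 0) z := (hd z hz).hasFDerivAt
  rw [h0.fderiv]
  ext
  simp

lemma sqrt_pos' (r t : ℝ) (hr : 0 < r) : 0 < Real.sqrt (r^2 + t^2) :=
  Real.sqrt_pos.2 (by positivity)

lemma hasDerivAt_s (r t : ℝ) (hr : 0 < r) :
    HasDerivAt (fun u : ℝ => Real.sqrt (r^2 + u^2)) (t / Real.sqrt (r^2 + t^2)) t := by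
  have h1 : HasDerivAt (fun u : ℝ => r^2 + u^2) (2*t) t := by
    simpa using ((hasDerivAt_pow 2 t).const_add (r^2))
  have h2 := (Real.hasDerivAt_sqrt (x := r^2 + t^2) (by positivity)).comp t h1
  refine h2.congr_deriv ?_
  symm
  have := (sqrt_pos' r t hr).ne'
  field_simp

lemma key_second (g : ℝ → ℝ) (hg : ContDiff ℝ 2 g) (r : ℝ) (hr : 0 < r) :
    deriv (deriv (fun t => g (Real.sqrt (r^2 + t^2)))) 0 = deriv g r / r := by
  have hgd : Differentiable ℝ g := hg.differentiable (by norm_num)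
  have hg1 : ContDiff ℝ 1 (deriv g) := by
    have := (contDiff_succ_iff_deriv (n := 1)).mp (by exact_mod_cast hg)
    exact this.2.2
  have hdgd : Differentiable ℝ (deriv g) := hg1.differentiable (by norm_num)
  set s : ℝ → ℝ := fun u => Real.sqrt (r^2 + u^2) with hs
  have hs0 : s 0 = r := by simp [hs, Real.sqrt_sq hr.le]
  have hF : ∀ t, HasDerivAt (fun u => g (s u)) (deriv g (s t) * (t / s t)) t := by
    intro t
    exact (hgd (s t)).hasDerivAt.comp t (hasDerivAt_s r t hr)
  have hderiv : deriv (fun u => g (s u)) = fun t => deriv g (s t) * (t / s t) :=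
    funext fun t => (hF t).deriv
  rw [hderiv]
  have hA : HasDerivAt (fun t => deriv g (s t)) (deriv (deriv g) (s 0) * (0 / s 0)) 0 :=
    (hdgd (s 0)).hasDerivAt.comp 0 (hasDerivAt_s r 0 hr)
  have hB : HasDerivAt (fun t => t / s t) ((1 * s 0 - 0 * (0 / s 0)) / (s 0)^2) 0 :=
    (hasDerivAt_id 0).div (hasDerivAt_s r 0 hr) (by rw [hs0]; exact hr.ne')
  have := HasDerivAt.deriv (f := fun t => deriv g (s t) * (t / s t)) (hA.mul hB)
  rw [this, hs0]
  field_simp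
  ring

def ee : E2 := EuclideanSpace.single 0 (1:ℝ)

lemma norm_smul_ee (t : ℝ) : ‖t • ee‖ = |t| := by
  simp [ee, norm_smul, EuclideanSpace.norm_single]

lemma norm_mix (r t : ℝ) : ‖r • ee + t • (EuclideanSpace.single (1 : Fin 2) (1:ℝ))‖
    = Real.sqrt (r^2 + t^2) := by
  rw [EuclideanSpace.norm_eq]
  congr 1
  simp [Fin.sum_univ_two, ee, EuclideanSpace.single_apply]

lemma lap_radial (v : E2 → ℝ) (hv : ContDiff ℝ 2 v)
    (hrep : ∀ x : E2, v x = (fun t => v (t • ee)) ‖x‖) (r : ℝ) (hr : 0 < r) :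
    lap v (r • ee) = deriv (deriv (fun t => v (t • ee))) r
      + deriv (fun t => v (t • ee)) r / r := by
  set g : ℝ → ℝ := fun t => v (t • ee) with hgdef
  have hsm : ContDiff ℝ 2 (fun t : ℝ => t • ee) := contDiff_id.smul contDiff_const
  have hg : ContDiff ℝ 2 g := hv.comp hsm
  rw [lap, Fin.sum_univ_two]
  have e0 : (fun t : ℝ => v (r • ee + t • (EuclideanSpace.single (0:Fin 2) (1:ℝ))))
      = fun t => g (r + t) := by
    funext t
    show v _ = v ((r+t) • ee)
    congr 1
    rw [ee, add_smul]
  have e1 : (fun t : ℝ => v (r • ee + t • (EuclideanSpace.single (1:Fin 2) (1:ℝ))))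
      = fun t => g (Real.sqrt (r^2 + t^2)) := by
    funext t
    rw [hrep (r • ee + t • (EuclideanSpace.single (1:Fin 2) (1:ℝ))), norm_mix]
  rw [e0, e1]
  have d0 : deriv (fun t => g (r + t)) = fun t => deriv g (r + t) :=
    funext fun t => deriv_comp_const_add g r t
  rw [d0, key_second g hg r hr]
  have : deriv (fun t => deriv g (r + t)) 0 = deriv (deriv g) (r + 0) :=
    deriv_comp_const_add (deriv g) r 0
  rw [this, add_zero]

end Stmt15Aux

open Stmt15Aux

theorem stmt15 (v : E2 → ℝ) (hv : ContDiff ℝ 2 v)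
    (hbdd : ∃ C : ℝ, ∀ x : E2, |v x| ≤ C)
    (hrad : ∀ x y : E2, ‖x‖ = ‖y‖ → v x = v y)
    (hpde : ∀ x : E2, -lap v x = 8 * Real.exp (2 * eta0 x) * v x)
    (hdir : Integrable (fun x : E2 => ‖gradient v x‖^2)) :
    ∃ α : ℝ, ∀ x : E2, v x = α * (1 - ‖x‖^2)/(1 + ‖x‖^2) := by
  classical
  set g : ℝ → ℝ := fun t => v (t • ee) with hgdef
  have hsm : ContDiff ℝ 2 (fun t : ℝ => t • ee) := contDiff_id.smul contDiff_const
  have hg : ContDiff ℝ 2 g := hv.comp hsm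
  have hgd : Differentiable ℝ g := hg.differentiable (by norm_num)
  have hg1 : ContDiff ℝ 1 (deriv g) := by
    have := (contDiff_succ_iff_deriv (n := 1)).mp (by exact_mod_cast hg)
    exact this.2.2
  have hdgd : Differentiable ℝ (deriv g) := hg1.differentiable (by norm_num)
  have hrep : ∀ x : E2, v x = g ‖x‖ := by
    intro x
    exact hrad x (‖x‖ • ee) (by rw [norm_smul_ee, abs_of_nonneg (norm_nonneg x)])
  -- exponential weight
  have hexp : ∀ x : E2, Real.exp (2 * eta0 x) = 1/(1+‖x‖^2)^2 := by
    intro x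
    rw [eta0, two_mul, ← neg_add, Real.exp_neg, Real.exp_add, Real.exp_log (denom_pos _)]
    rw [one_div]
    congr 1
    ring
  -- the radial ODE
  have hODE : ∀ r : ℝ, 0 < r →
      deriv (deriv g) r = -(deriv g r / r) - 8/(1+r^2)^2 * g r := by
    intro r hr
    have h1 := hpde (r • ee)
    rw [lap_radial v hv (fun x => hrep x) r hr, hexp, norm_smul_ee, abs_of_pos hr] at h1
    rw [← hgdef] at h1
    have e : (8:ℝ) * (1/(1+r^2)^2) * g r = 8/(1+r^2)^2 * g r := by ring
    rw [e] at h1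
    linarith
  -- Wronskian times r is constant zero on Ioi 0
  set W : ℝ → ℝ := fun r => deriv g r * phi r - g r * phiD r with hW
  set Z : ℝ → ℝ := fun r => r * W r with hZ
  have hZderiv : ∀ r ∈ Ioi (0:ℝ), HasDerivAt Z 0 r := by
    intro r hr
    have hr' : (0:ℝ) < r := hr
    have hWd : HasDerivAt W
        ((deriv (deriv g) r * phi r + deriv g r * phiD r)
          - (deriv g r * phiD r + g r * phiDD r)) r :=
      (((hdgd r).hasDerivAt.mul (hasDerivAt_phi r)).sub
        ((hgd r).hasDerivAt.mul (hasDerivAt_phiD r)))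
    have hZd := (hasDerivAt_id r).mul hWd
    refine hZd.congr_deriv ?_
    symm
    rw [hODE r hr', phi_ode r hr'.ne']
    have hrne := hr'.ne'
    simp only [hW, id]
    field_simp [hW]
    ring
  have hZcont : Continuous Z := by
    apply continuous_id.mul
    exact ((hg1.continuous.mul continuous_phi).sub
      (hgd.continuous.mul continuous_phiD))
  have hWzero : ∀ r : ℝ, 0 < r → W r = 0 := by
    intro r hr
    have hconst : ∀ t ∈ Ioi (0:ℝ), Z t = Z r := fun t ht =>
      const_of_deriv_zero isOpen_Ioi (convex_Ioi 0) hZderiv ht hr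
    have hlim1 : Tendsto Z (𝓝[>] (0:ℝ)) (𝓝 (Z 0)) :=
      (hZcont.continuousAt.continuousWithinAt : ContinuousWithinAt Z (Ioi 0) 0)
    have hlim2 : Tendsto Z (𝓝[>] (0:ℝ)) (𝓝 (Z r)) := by
      apply Tendsto.congr' _ tendsto_const_nhds
      filter_upwards [self_mem_nhdsWithin] with t ht
      exact (hconst t ht).symm
    have hZ0 : Z 0 = 0 := by simp [hZ]
    have := tendsto_nhds_unique hlim2 hlim1
    rw [hZ0] at this
    have hZr : Z r = 0 := this
    have : r * W r = 0 := hZr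
    rcases mul_eq_zero.mp this with h | h
    · exact absurd h hr.ne'
    · exact h
  -- quotient g/phi
  set Q : ℝ → ℝ := fun r => g r / phi r with hQ
  have hQderiv : ∀ r : ℝ, 0 < r → phi r ≠ 0 → HasDerivAt Q 0 r := by
    intro r hr hphine
    have h := ((hgd r).hasDerivAt.div (hasDerivAt_phi r) hphine)
    have hw0 : deriv g r * phi r - g r * phiD r = 0 := hWzero r hr
    have : (deriv g r * phi r - g r * phiD r) / (phi r)^2 = 0 := by
      rw [hw0]; simp
    rwa [this] at h
  have hphi_pos : ∀ r : ℝ, 0 ≤ r → r < 1 → 0 < phi r := by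
    intro r h0 h1
    apply div_pos _ (denom_pos r)
    nlinarith
  have hphi_neg : ∀ r : ℝ, 1 < r → phi r < 0 := by
    intro r h1
    apply div_neg_of_neg_of_pos _ (denom_pos r)
    nlinarith
  -- on Ioo 0 1 : g = g 0 * phi
  have hc1 : ∀ r ∈ Ioo (0:ℝ) 1, g r = g 0 * phi r := by
    intro r hr
    have hQconst : ∀ t ∈ Ioo (0:ℝ) 1, Q t = Q r := fun t ht =>
      const_of_deriv_zero isOpen_Ioo (convex_Ioo 0 1)
        (fun z hz => hQderiv z hz.1 (hphi_pos z hz.1.le hz.2).ne') ht hr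
    -- limit of Q at 0+
    have hphi0 : phi 0 = 1 := by norm_num [phi]
    have hQc : ContinuousAt Q 0 := by
      apply ContinuousAt.div (hgd.continuous.continuousAt) continuous_phi.continuousAt
      rw [hphi0]; norm_num
    have hlim1 : Tendsto Q (𝓝[>] (0:ℝ)) (𝓝 (Q 0)) := hQc.continuousWithinAt
    have hlim2 : Tendsto Q (𝓝[>] (0:ℝ)) (𝓝 (Q r)) := by
      apply Tendsto.congr' _ tendsto_const_nhds
      filter_upwards [Ioo_mem_nhdsGT_of_mem (left_mem_Ico.2 one_pos)] with t ht
      exact (hQconst t ht).symm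
    have hQr : g r / phi r = g 0 / phi 0 := tendsto_nhds_unique hlim2 hlim1
    rw [hphi0, div_one] at hQr
    have hne := (hphi_pos r hr.1.le hr.2).ne'
    rw [← hQr]
    field_simp
  -- value and derivative of g at 1
  have hg1val : g 1 = 0 := by
    have hgc : Tendsto g (𝓝[<] (1:ℝ)) (𝓝 (g 1)) :=
      (hgd.continuous.continuousAt).continuousWithinAt
    have hev : (fun t => g 0 * phi t) =ᶠ[𝓝[<] (1:ℝ)] g := by
      filter_upwards [Ioo_mem_nhdsLT_of_mem (right_mem_Ioc.2 one_pos)] with t ht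
      exact (hc1 t ht).symm
    have hlim2 : Tendsto g (𝓝[<] (1:ℝ)) (𝓝 (g 0 * phi 1)) :=
      Tendsto.congr' hev (((continuous_const.mul continuous_phi).continuousAt).continuousWithinAt)
    have := tendsto_nhds_unique hgc hlim2
    rw [this]
    norm_num [phi]
  have hdg_eq_left : ∀ r ∈ Ioo (0:ℝ) 1, deriv g r = g 0 * phiD r := by
    intro r hr
    have hev : g =ᶠ[𝓝 r] fun t => g 0 * phi t :=
      Filter.eventuallyEq_of_mem (isOpen_Ioo.mem_nhds hr) (fun t ht => hc1 t ht)
    rw [hev.deriv_eq]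
    exact (((hasDerivAt_phi r).const_mul (g 0))).deriv
  have hdg1 : deriv g 1 = g 0 * phiD 1 := by
    have hgc : Tendsto (deriv g) (𝓝[<] (1:ℝ)) (𝓝 (deriv g 1)) :=
      (hg1.continuous.continuousAt).continuousWithinAt
    have hev : (fun t => g 0 * phiD t) =ᶠ[𝓝[<] (1:ℝ)] deriv g := by
      filter_upwards [Ioo_mem_nhdsLT_of_mem (right_mem_Ioc.2 one_pos)] with t ht
      exact (hdg_eq_left t ht).symm
    have hlim2 : Tendsto (deriv g) (𝓝[<] (1:ℝ)) (𝓝 (g 0 * phiD 1)) :=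
      Tendsto.congr' hev (((continuous_const.mul continuous_phiD).continuousAt).continuousWithinAt)
    exact tendsto_nhds_unique hgc hlim2
  -- on Ioi 1 : g = c2 * phi with c2 = g 0
  have hc2 : ∀ r ∈ Ioi (1:ℝ), g r = g 0 * phi r := by
    intro r hr
    have hQconst : ∀ t ∈ Ioi (1:ℝ), Q t = Q r := fun t ht =>
      const_of_deriv_zero isOpen_Ioi (convex_Ioi 1)
        (fun z hz => hQderiv z (lt_trans one_pos hz) (hphi_neg z hz).ne) ht hr
    set c2 : ℝ := Q r with hc2def
    have hgq : ∀ t ∈ Ioi (1:ℝ), g t = c2 * phi t := by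
      intro t ht
      have h : g t / phi t = c2 := hQconst t ht
      have hne := (hphi_neg t ht).ne
      rw [← h]
      field_simp
    have hdg_eq_right : ∀ t ∈ Ioi (1:ℝ), deriv g t = c2 * phiD t := by
      intro t ht
      have hev : g =ᶠ[𝓝 t] fun u => c2 * phi u :=
        Filter.eventuallyEq_of_mem (isOpen_Ioi.mem_nhds ht) (fun u hu => hgq u hu)
      rw [hev.deriv_eq]
      exact (((hasDerivAt_phi t).const_mul c2)).deriv
    have hgc : Tendsto (deriv g) (𝓝[>] (1:ℝ)) (𝓝 (deriv g 1)) :=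
      (hg1.continuous.continuousAt).continuousWithinAt
    have hev : (fun t => c2 * phiD t) =ᶠ[𝓝[>] (1:ℝ)] deriv g := by
      filter_upwards [self_mem_nhdsWithin] with t ht
      exact (hdg_eq_right t ht).symm
    have hlim2 : Tendsto (deriv g) (𝓝[>] (1:ℝ)) (𝓝 (c2 * phiD 1)) :=
      Tendsto.congr' hev (((continuous_const.mul continuous_phiD).continuousAt).continuousWithinAt)
    have heq : deriv g 1 = c2 * phiD 1 := tendsto_nhds_unique hgc hlim2
    have hphiD1 : phiD 1 = -1 := by norm_num [phiD]
    rw [hdg1, hphiD1] at heq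
    have hc2eq : c2 = g 0 := by linarith
    rw [hgq r hr, hc2eq]
  -- all nonneg r
  have hall : ∀ r : ℝ, 0 ≤ r → g r = g 0 * phi r := by
    intro r hr
    rcases lt_trichotomy r 1 with h | h | h
    · rcases eq_or_lt_of_le hr with h0 | h0
      · rw [← h0]; norm_num [phi]
      · exact hc1 r ⟨h0, h⟩
    · rw [h, hg1val]
      norm_num [phi]
    · exact hc2 r h
  refine ⟨g 0, fun x => ?_⟩
  rw [hrep x, hall ‖x‖ (norm_nonneg x), mul_div_assoc]
  rfl
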